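/- For any subset A of a topological space X, the θ-closed hull [A]_θ can be obtained by iterating the θ-closure operator: setting A_0 = A and A_α = cl_θ(⋃_{β<α} A_β) for 0 < α ≤ κ(X)⁺, one has [A]_θ = A_{κ(X)⁺}. -/

import Mathlib

open Set Topology Cardinal

universe u

variable {X : Type u}

/-- The θ-closure of a set. -/
def thetaCl [TopologicalSpace X] (A : Set X) : Set X :=
  {x | ∀ U : Set X, IsOpen U → x ∈ U → (closure U ∩ A).Nonempty}

/-- The θ-closed hull of a set. -/
def thetaHull [TopologicalSpace X] (A : Set X) : Set X :=
  ⋂₀ {C : Set X | thetaCl C = C ∧ A ⊆ C}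

/-- A nonempty set is finitely non-Urysohn if every finite choice of closed
neighborhoods (closures of open neighborhoods) of finitely many of its points
has nonempty intersection. -/
def FinNonUrysohn [TopologicalSpace X] (A : Set X) : Prop :=
  A.Nonempty ∧ ∀ F : Set X, F ⊆ A → F.Nonempty → F.Finite →
    ∀ U : X → Set X, (∀ x ∈ F, IsOpen (U x) ∧ x ∈ U x) →
      (⋂ x ∈ F, closure (U x)).Nonempty

/-- The non-Urysohn number `nu(X)`. -/
noncomputable def nuNumber (X : Type u) [TopologicalSpace X] : Cardinal.{u} :=
  1 + ⨆ A : {A : Set X // FinNonUrysohn A}, #↥A.1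

/-- The Urysohn number `U(X)`. -/
noncomputable def UrysohnNumber (X : Type u) [TopologicalSpace X] : Cardinal.{u} :=
  sInf {κ : Cardinal.{u} | ∀ A : Set X, κ ≤ #↥A → ∃ U : X → Set X,
    (∀ a ∈ A, IsOpen (U a) ∧ a ∈ U a) ∧ (⋂ a ∈ A, closure (U a)) = ∅}

/-- The cardinal function `κ(X)`: the smallest infinite cardinal such that each
point has a family of at most that many closed neighborhoods cofinal (under
reverse inclusion) in the closures of its open neighborhoods. -/
noncomputable def kappaInv (X : Type u) [TopologicalSpace X] : Cardinal.{u} :=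
  sInf {κ : Cardinal.{u} | ℵ₀ ≤ κ ∧ ∀ x : X, ∃ V : Set (Set X), #↥V ≤ κ ∧
    (∀ W ∈ V, IsClosed W ∧ W ∈ nhds x) ∧
    ∀ U : Set X, IsOpen U → x ∈ U → ∃ W ∈ V, W ⊆ closure U}

/-- The character `χ(X)`. -/
noncomputable def chiChar (X : Type u) [TopologicalSpace X] : Cardinal.{u} :=
  sInf {κ : Cardinal.{u} | ℵ₀ ≤ κ ∧ ∀ x : X, ∃ B : Set (Set X), #↥B ≤ κ ∧
    (∀ U ∈ B, U ∈ nhds x) ∧ ∀ S ∈ nhds x, ∃ U ∈ B, U ⊆ S}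

/-- The θ-density `d_θ(X)`. -/
noncomputable def dTheta (X : Type u) [TopologicalSpace X] : Cardinal.{u} :=
  sInf {c : Cardinal.{u} | ∃ A : Set X, thetaCl A = Set.univ ∧ #↥A = c}

/-- The cardinal function `sL_θ(X)`. -/
noncomputable def sLtheta (X : Type u) [TopologicalSpace X] : Cardinal.{u} :=
  sInf {τ : Cardinal.{u} | ℵ₀ ≤ τ ∧ ∀ A : Set X, ∀ 𝒰 : Set (Set X),
    (∀ U ∈ 𝒰, IsOpen U) → thetaCl A ⊆ ⋃₀ 𝒰 →
    ∃ 𝒱 ⊆ 𝒰, #↥𝒱 ≤ τ ∧ A ⊆ closure (⋃₀ 𝒱)}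

/-- The cardinal function `wL_c(X)`. -/
noncomputable def wLc (X : Type u) [TopologicalSpace X] : Cardinal.{u} :=
  sInf {τ : Cardinal.{u} | ℵ₀ ≤ τ ∧ ∀ A : Set X, IsClosed A → ∀ 𝒰 : Set (Set X),
    (∀ U ∈ 𝒰, IsOpen U) → A ⊆ ⋃₀ 𝒰 →
    ∃ 𝒱 ⊆ 𝒰, #↥𝒱 ≤ τ ∧ A ⊆ closure (⋃₀ 𝒱)}

/-- The almost Lindelöf degree `aL(X)`. -/
noncomputable def aLdeg (X : Type u) [TopologicalSpace X] : Cardinal.{u} :=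
  sInf {τ : Cardinal.{u} | ℵ₀ ≤ τ ∧ ∀ 𝒰 : Set (Set X),
    (∀ U ∈ 𝒰, IsOpen U) → ⋃₀ 𝒰 = Set.univ →
    ∃ 𝒱 ⊆ 𝒰, #↥𝒱 ≤ τ ∧ (⋃ V ∈ 𝒱, closure V) = Set.univ}

/-- `X` is a Urysohn space: distinct points have open neighborhoods with
disjoint closures. -/
def UrysohnSpace (X : Type u) [TopologicalSpace X] : Prop :=
  ∀ x y : X, x ≠ y → ∃ U V : Set X, IsOpen U ∧ IsOpen V ∧ x ∈ U ∧ y ∈ V ∧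
    closure U ∩ closure V = ∅

/-- For a set `S`, the intersection over all choices of closed neighborhoods of
the points of `S` of the θ-closures of the intersections of the choices. -/
def capSet [TopologicalSpace X] (S : Set X) : Set X :=
  {y | ∀ U : X → Set X, (∀ a ∈ S, IsOpen (U a) ∧ a ∈ U a) →
    y ∈ thetaCl (⋂ a ∈ S, closure (U a))}

/-- For a set `M`, the intersection over all nonempty finite `F ⊆ M` and all
choices of open neighborhoods of points of `F` of
`cl_θ(⋂_{x∈F} closure (U x))`. -/
def fnuCap [TopologicalSpace X] (M : Set X) : Set X :=
  {y | ∀ F : Set X, F ⊆ M → F.Nonempty → F.Finite → ∀ U : X → Set X,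
    (∀ x ∈ F, IsOpen (U x) ∧ x ∈ U x) →
    y ∈ thetaCl (⋂ x ∈ F, closure (U x))}

/-- Transfinite iteration of the θ-closure: `thetaIter A 0 = A` and
`thetaIter A α = cl_θ(⋃_{β<α} thetaIter A β)` for `α > 0`. -/
noncomputable def thetaIter [TopologicalSpace X] (A : Set X) (o : Ordinal.{u}) : Set X :=
  if o = 0 then A
  else thetaCl (⋃ b : {b : Ordinal.{u} // b < o}, thetaIter A b.1)
termination_by o
decreasing_by exact b.2


lemma subset_thetaCl [TopologicalSpace X] (A : Set X) : A ⊆ thetaCl A := by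
  intro x hx U _ hxU
  exact ⟨x, subset_closure hxU, hx⟩

lemma thetaCl_mono [TopologicalSpace X] {A B : Set X} (h : A ⊆ B) :
    thetaCl A ⊆ thetaCl B := by
  intro x hx U hU hxU
  obtain ⟨y, hy1, hy2⟩ := hx U hU hxU
  exact ⟨y, hy1, h hy2⟩

lemma subset_thetaHull [TopologicalSpace X] (A : Set X) : A ⊆ thetaHull A := by
  intro x hx C hC
  exact hC.2 hx

lemma thetaHull_closed [TopologicalSpace X] (A : Set X) :
    thetaCl (thetaHull A) = thetaHull A := by
  apply Subset.antisymm _ (subset_thetaCl _)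
  intro x hx C hC
  rw [← hC.1]
  exact thetaCl_mono (fun y hy => Set.mem_sInter.1 hy C hC) hx

lemma thetaIter_zero [TopologicalSpace X] (A : Set X) : thetaIter A 0 = A := by
  rw [thetaIter]; simp

lemma thetaIter_pos [TopologicalSpace X] (A : Set X) {o : Ordinal.{u}} (h : o ≠ 0) :
    thetaIter A o = thetaCl (⋃ b : {b : Ordinal.{u} // b < o}, thetaIter A b.1) := by
  rw [thetaIter]; simp [h]

lemma thetaIter_mono [TopologicalSpace X] (A : Set X) {b o : Ordinal.{u}} (h : b ≤ o) :
    thetaIter A b ⊆ thetaIter A o := by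
  rcases eq_or_lt_of_le h with rfl | h
  · exact subset_rfl
  have ho : o ≠ 0 := fun h0 => (not_lt_of_ge (zero_le (a := b)) (h0 ▸ h))
  rw [thetaIter_pos A ho]
  exact (Set.subset_iUnion (fun c : {c : Ordinal.{u} // c < o} => thetaIter A c.1)
    ⟨b, h⟩).trans (subset_thetaCl _)

lemma thetaIter_subset_hull [TopologicalSpace X] (A : Set X) (o : Ordinal.{u}) :
    thetaIter A o ⊆ thetaHull A := by
  induction o using Ordinal.induction with
  | h o ih =>
    rcases eq_or_ne o 0 with rfl | ho
    · rw [thetaIter_zero]; exact subset_thetaHull A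
    · rw [thetaIter_pos A ho, ← thetaHull_closed A]
      exact thetaCl_mono (Set.iUnion_subset fun b => ih b.1 b.2)

lemma kappaInv_spec (X : Type u) [TopologicalSpace X] :
    ℵ₀ ≤ kappaInv X ∧ ∀ x : X, ∃ V : Set (Set X), #↥V ≤ kappaInv X ∧
    (∀ W ∈ V, IsClosed W ∧ W ∈ nhds x) ∧
    ∀ U : Set X, IsOpen U → x ∈ U → ∃ W ∈ V, W ⊆ closure U := by
  have : kappaInv X ∈ {κ : Cardinal.{u} | ℵ₀ ≤ κ ∧ ∀ x : X, ∃ V : Set (Set X), #↥V ≤ κ ∧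
      (∀ W ∈ V, IsClosed W ∧ W ∈ nhds x) ∧
      ∀ U : Set X, IsOpen U → x ∈ U → ∃ W ∈ V, W ⊆ closure U} := by
    apply csInf_mem
    refine ⟨max ℵ₀ #(Set X), le_max_left _ _, fun x => ?_⟩
    refine ⟨{W : Set X | IsClosed W ∧ W ∈ nhds x},
      (Cardinal.mk_set_le _).trans (le_max_right _ _), fun W hW => hW, fun U hU hxU => ?_⟩
    exact ⟨closure U, ⟨isClosed_closure, Filter.mem_of_superset (hU.mem_nhds hxU) subset_closure⟩,
      subset_rfl⟩
  exact this

theorem thetaIter_closed [TopologicalSpace X] (A : Set X) :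
    thetaCl (thetaIter A ((Order.succ (kappaInv X)).ord)) =
      thetaIter A ((Order.succ (kappaInv X)).ord) := by
  obtain ⟨hκ, hspec⟩ := kappaInv_spec X
  set κ := kappaInv X
  set lam := (Order.succ κ).ord with hlam
  have hκ' : ℵ₀ ≤ Order.succ κ := hκ.trans (Order.le_succ κ)
  have hreg : (Order.succ κ).IsRegular := Cardinal.isRegular_succ hκ
  have hlim : Order.IsSuccLimit lam := Cardinal.isSuccLimit_ord hκ'
  have hne : lam ≠ 0 := hlim.pos.ne'
  -- the union of earlier stages
  set B := ⋃ b : {b : Ordinal.{u} // b < lam}, thetaIter A b.1 with hB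
  have hBcl : thetaCl B ⊆ B := by
    intro x hx
    obtain ⟨V, hVcard, hVnb, hVcof⟩ := hspec x
    -- for each W ∈ V pick a witness stage
    have hpick : ∀ W : ↥V, ∃ o : Ordinal.{u}, o < lam ∧ (W.1 ∩ thetaIter A o).Nonempty := by
      intro ⟨W, hW⟩
      obtain ⟨hWc, hWn⟩ := hVnb W hW
      obtain ⟨U, hUW, hUo, hxU⟩ := mem_nhds_iff.1 hWn
      obtain ⟨y, hycl, hyB⟩ := hx U hUo hxU
      obtain ⟨b, hyb⟩ := Set.mem_iUnion.1 hyB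
      exact ⟨b.1, b.2, y, (closure_minimal hUW hWc) hycl, hyb⟩
    choose g hg1 hg2 using hpick
    have hγ : (⨆ W : ↥V, g W) < lam :=
      Cardinal.iSup_lt_ord_of_isRegular hreg (hVcard.trans_lt (Order.lt_succ κ)) hg1
    have hsucc : Order.succ (⨆ W : ↥V, g W) < lam := hlim.succ_lt hγ
    refine Set.mem_iUnion.2 ⟨⟨Order.succ (⨆ W : ↥V, g W), hsucc⟩, ?_⟩
    rw [thetaIter_pos A (Order.succ_ne_bot _)]
    intro U hUo hxU
    obtain ⟨W, hWV, hWU⟩ := hVcof U hUo hxU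
    obtain ⟨y, hyW, hyi⟩ := hg2 ⟨W, hWV⟩
    refine ⟨y, hWU hyW, Set.mem_iUnion.2 ⟨⟨⨆ W : ↥V, g W, Order.lt_succ _⟩, ?_⟩⟩
    exact thetaIter_mono A (le_ciSup (Ordinal.bddAbove_range _) (⟨W, hWV⟩ : ↥V)) hyi
  have h1 : thetaIter A lam = B := by
    apply Subset.antisymm
    · rw [thetaIter_pos A hne]; exact hBcl
    · rw [thetaIter_pos A hne]; exact subset_thetaCl _
  rw [h1]
  exact Subset.antisymm hBcl (subset_thetaCl _)

theorem statement19 [TopologicalSpace X] (A : Set X) :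
    thetaHull A = thetaIter A ((Order.succ (kappaInv X)).ord) := by
  apply Subset.antisymm
  · refine sInter_subset_of_mem ⟨thetaIter_closed A, fun y hy => ?_⟩
    exact thetaIter_mono A zero_le (by rwa [thetaIter_zero A])
  · exact thetaIter_subset_hull A _
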